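/- arXiv:2307.16552 — 2 statements merged into one kernel-verified Lean document; each statement's English description precedes it below -/
import Mathlib

section
/- Let R : X ⇸ Y be a total and surjective relation, with projection functions π_X : R → X and π_Y : R → Y from R viewed as a set of pairs. Then M̃ R = (gr(M π_X))° ; gr(M π_Y), i.e., (U, V) ∈ M̃ R if and only if there exists W ∈ M R with (M π_X) W = U and (M π_Y) W = V. -/
universe u v

open CategoryTheory

/-- The graph of a function, as a relation. -/
def gr {X Y : Type u} (f : X → Y) : Rel X Y := fun x y => f x = y

/-- A lax lifting of an endofunctor `F` on `Set` to relations: monotone, laxly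
functorial, and laxly extending graphs and converse graphs. -/
structure LaxLifting (F : Type u ⥤ Type u) : Type (u + 1) where
  map : ∀ {X Y : Type u}, Rel X Y → Rel (F.obj X) (F.obj Y)
  mono : ∀ {X Y : Type u} {R S : Rel X Y}, R ≤ S → map R ≤ map S
  laxComp : ∀ {X Y Z : Type u} (R : Rel X Y) (S : Rel Y Z),
    Relation.Comp (map R) (map S) ≤ map (Relation.Comp R S)
  graph_le : ∀ {X Y : Type u} (f : X → Y), gr ⇑(F.map (TypeCat.ofHom f)) ≤ map (gr f)
  graphInv_le : ∀ {X Y : Type u} (f : X → Y), flip (gr ⇑(F.map (TypeCat.ofHom f))) ≤ map (flip (gr f))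

/-- Pointwise order on lax liftings. -/
def LiftLE {F : Type u ⥤ Type u} (L L' : LaxLifting F) : Prop :=
  ∀ (X Y : Type u) (R : Rel X Y), L.map R ≤ L'.map R

/-- The monotone neighbourhood functor: \`M X\` is the set of upward-closed
collections of subsets of \`X\`. -/
def MFunctor : Type u ⥤ Type u where
  obj X := {U : Set (Set X) // ∀ u u' : Set X, u ∈ U → u ⊆ u' → u' ∈ U}
  map f := TypeCat.ofHom fun U => ⟨{v | ⇑f ⁻¹' v ∈ U.1}, fun v v' hv hsub =>
    U.2 _ _ hv (Set.preimage_mono hsub)⟩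
  map_id X := rfl
  map_comp f g := rfl

/-- The lifting \`M̃\` of the monotone neighbourhood functor. -/
def Mtilde {X Y : Type u} (R : Rel X Y) :
    Rel (MFunctor.obj X) (MFunctor.obj Y) := fun U V =>
  (∀ u ∈ U.1, ∃ v ∈ V.1, ∀ y ∈ v, ∃ x ∈ u, R x y) ∧
  (∀ v ∈ V.1, ∃ u ∈ U.1, ∀ x ∈ u, ∃ y ∈ v, R x y)
/-- For a total surjective relation `R`, with projections `π_X, π_Y` out of `R`
viewed as a set of pairs, `M̃ R = (gr (M π_X))° ; gr (M π_Y)`: i.e.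
`(U, V) ∈ M̃ R` iff there is `W ∈ M R` with `(M π_X) W = U` and `(M π_Y) W = V`. -/
theorem Mtilde_eq_span_of_total_surjective {X Y : Type u} (R : Rel X Y)
    (htot : ∀ x : X, ∃ y : Y, R x y) (hsur : ∀ y : Y, ∃ x : X, R x y)
    (U : MFunctor.obj X) (V : MFunctor.obj Y) :
    Mtilde R U V ↔
      ∃ W : MFunctor.obj {p : X × Y // R p.1 p.2},
        MFunctor.map (TypeCat.ofHom fun p : {p : X × Y // R p.1 p.2} => p.1.1) W = U ∧
        MFunctor.map (TypeCat.ofHom fun p : {p : X × Y // R p.1 p.2} => p.1.2) W = V := by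
  constructor
  · rintro ⟨h1, h2⟩
    set πX : {p : X × Y // R p.1 p.2} → X := fun p => p.1.1 with hπX
    set πY : {p : X × Y // R p.1 p.2} → Y := fun p => p.1.2 with hπY
    refine ⟨⟨{w | (∃ u ∈ U.1, πX ⁻¹' u ⊆ w) ∨ (∃ v ∈ V.1, πY ⁻¹' v ⊆ w)}, ?_⟩, ?_, ?_⟩
    · rintro w w' (⟨u, hu, hsub⟩ | ⟨v, hv, hsub⟩) hww'
      · exact Or.inl ⟨u, hu, hsub.trans hww'⟩
      · exact Or.inr ⟨v, hv, hsub.trans hww'⟩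
    · apply Subtype.ext
      ext u
      simp only [MFunctor, Set.mem_setOf_eq]
      constructor
      · rintro (⟨u', hu', hsub⟩ | ⟨v, hv, hsub⟩)
        · refine U.2 u' u hu' (fun x hx => ?_)
          obtain ⟨y, hy⟩ := htot x
          exact hsub (show πX ⟨(x, y), hy⟩ ∈ u' from hx)
        · obtain ⟨u', hu', h⟩ := h2 v hv
          refine U.2 u' u hu' (fun x hx => ?_)
          obtain ⟨y, hy, hxy⟩ := h x hx
          exact hsub (show πY ⟨(x, y), hxy⟩ ∈ v from hy)
      · intro hu
        exact Or.inl ⟨u, hu, le_refl _⟩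
    · apply Subtype.ext
      ext v
      simp only [MFunctor, Set.mem_setOf_eq]
      constructor
      · rintro (⟨u, hu, hsub⟩ | ⟨v', hv', hsub⟩)
        · obtain ⟨v', hv', h⟩ := h1 u hu
          refine V.2 v' v hv' (fun y hy => ?_)
          obtain ⟨x, hx, hxy⟩ := h y hy
          exact hsub (show πX ⟨(x, y), hxy⟩ ∈ u from hx)
        · refine V.2 v' v hv' (fun y hy => ?_)
          obtain ⟨x, hx⟩ := hsur y
          exact hsub (show πY ⟨(x, y), hx⟩ ∈ v' from hy)
      · intro hv
        exact Or.inr ⟨v, hv, le_refl _⟩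
  · rintro ⟨W, rfl, rfl⟩
    constructor
    · intro u hu
      refine ⟨{y | ∃ x ∈ u, R x y}, ?_, fun y hy => hy⟩
      show (fun p : {p : X × Y // R p.1 p.2} => p.1.2) ⁻¹' _ ∈ W.1
      refine W.2 _ _ hu (fun p hp => ?_)
      exact ⟨p.1.1, hp, p.2⟩
    · intro v hv
      refine ⟨{x | ∃ y ∈ v, R x y}, ?_, fun x hx => hx⟩
      show (fun p : {p : X × Y // R p.1 p.2} => p.1.1) ⁻¹' _ ∈ W.1
      refine W.2 _ _ hv (fun p hp => ?_)
      exact ⟨p.1.2, hp, p.2⟩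
end

section
/- The lifting M̃ is the minimal lax lifting of the monotone neighbourhood functor M: M̃ is itself a lax M-lifting, and for every lax M-lifting L and every relation R : X ⇸ Y, M̃ R ⊆ L R. -/
universe u v

open CategoryTheory

-- auxiliary lemmas

theorem Mtilde_mono' {X Y : Type u} {R S : Rel X Y} (h : R ≤ S) :
    Mtilde R ≤ Mtilde S := by
  rintro U V ⟨h1, h2⟩
  constructor
  · intro u hu
    obtain ⟨v, hv, hv2⟩ := h1 u hu
    exact ⟨v, hv, fun y hy => by
      obtain ⟨x, hx, hr⟩ := hv2 y hy
      exact ⟨x, hx, h x y hr⟩⟩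
  · intro v hv
    obtain ⟨u, hu, hu2⟩ := h2 v hv
    exact ⟨u, hu, fun x hx => by
      obtain ⟨y, hy, hr⟩ := hu2 x hx
      exact ⟨y, hy, h x y hr⟩⟩

theorem Mtilde_laxComp {X Y Z : Type u} (R : Rel X Y) (S : Rel Y Z) :
    Relation.Comp (Mtilde R) (Mtilde S) ≤ Mtilde (Relation.Comp R S) := by
  rintro U V ⟨W, ⟨hUW1, hUW2⟩, ⟨hWV1, hWV2⟩⟩
  constructor
  · intro u hu
    obtain ⟨w, hw, hw2⟩ := hUW1 u hu
    obtain ⟨v, hv, hv2⟩ := hWV1 w hw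
    refine ⟨v, hv, fun z hz => ?_⟩
    obtain ⟨y, hy, hS⟩ := hv2 z hz
    obtain ⟨x, hx, hR⟩ := hw2 y hy
    exact ⟨x, hx, y, hR, hS⟩
  · intro v hv
    obtain ⟨w, hw, hw2⟩ := hWV2 v hv
    obtain ⟨u, hu, hu2⟩ := hUW2 w hw
    refine ⟨u, hu, fun x hx => ?_⟩
    obtain ⟨y, hy, hR⟩ := hu2 x hx
    obtain ⟨z, hz, hS⟩ := hw2 y hy
    exact ⟨z, hz, y, hR, hS⟩

theorem Mtilde_graph_le {X Y : Type u} (f : X → Y) :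
    gr ⇑(MFunctor.map (TypeCat.ofHom f)) ≤ Mtilde (gr f) := by
  intro U V h
  have h' : MFunctor.map (TypeCat.ofHom f) U = V := h
  subst h'
  constructor
  · intro u hu
    refine ⟨f '' u, ?_, ?_⟩
    · exact U.2 u (f ⁻¹' (f '' u)) hu (Set.subset_preimage_image f u)
    · rintro y ⟨x, hx, rfl⟩
      exact ⟨x, hx, rfl⟩
  · intro v hv
    exact ⟨f ⁻¹' v, hv, fun x hx => ⟨f x, hx, rfl⟩⟩

theorem Mtilde_graphInv_le {X Y : Type u} (f : X → Y) :
    flip (gr ⇑(MFunctor.map (TypeCat.ofHom f))) ≤ Mtilde (flip (gr f)) := by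
  intro V U h
  have h' : MFunctor.map (TypeCat.ofHom f) U = V := h
  subst h'
  constructor
  · intro v hv
    exact ⟨f ⁻¹' v, hv, fun x hx => ⟨f x, hx, rfl⟩⟩
  · intro u hu
    refine ⟨f '' u, ?_, ?_⟩
    · exact U.2 u (f ⁻¹' (f '' u)) hu (Set.subset_preimage_image f u)
    · rintro y ⟨x, hx, rfl⟩
      exact ⟨x, hx, rfl⟩

section Min

variable {X Y : Type u} (R : Rel X Y)

/-- first leg: `x ↦ R[x]`. -/
def rhoMap : X → Set Y := fun x => {y | R x y}

/-- last leg: `y ↦ {s | y ∈ s}`. -/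
def lamMap : Y → Set (Set Y) := fun y => {s | y ∈ s}

/-- the span object for the membership relation `Set Y ⇸ Set (Set Y)`. -/
def EType (Y : Type u) : Type u := {p : Set Y × Set (Set Y) // p.1 ∈ p.2}

def fMap : EType Y → Set Y := fun e => e.1.1
def gMap : EType Y → Set (Set Y) := fun e => e.1.2

/-- the witness up-set over the span object. -/
def Wset (U : MFunctor.obj X) (V : MFunctor.obj Y) : MFunctor.obj (EType Y) :=
  ⟨{w | (∃ S : Set (Set Y), rhoMap R ⁻¹' S ∈ U.1 ∧ fMap ⁻¹' S ⊆ w) ∨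
        (∃ A : Set (Set (Set Y)), lamMap ⁻¹' A ∈ V.1 ∧ gMap ⁻¹' A ⊆ w)},
   fun w w' hw hsub => hw.imp
     (fun ⟨S, h1, h2⟩ => ⟨S, h1, h2.trans hsub⟩)
     (fun ⟨A, h1, h2⟩ => ⟨A, h1, h2.trans hsub⟩)⟩

theorem Wset_f {U : MFunctor.obj X} {V : MFunctor.obj Y} (h : Mtilde R U V) :
    MFunctor.map (TypeCat.ofHom fMap) (Wset R U V) = MFunctor.map (TypeCat.ofHom (rhoMap R)) U := by
  apply Subtype.ext
  ext S
  show fMap ⁻¹' S ∈ (Wset R U V).1 ↔ rhoMap R ⁻¹' S ∈ U.1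
  constructor
  · rintro (⟨T, hTU, hsub⟩ | ⟨A, hAV, hsub⟩)
    · refine U.2 _ _ hTU fun x hx => ?_
      exact hsub (show fMap (⟨(rhoMap R x, {rhoMap R x}), rfl⟩ : EType Y) ∈ T from hx)
    · obtain ⟨u₀, hu₀, hu₀2⟩ := h.2 (lamMap ⁻¹' A) hAV
      refine U.2 _ _ hu₀ fun x hx => ?_
      obtain ⟨y, hyv, hxy⟩ := hu₀2 x hx
      exact hsub (show gMap (⟨(rhoMap R x, lamMap y), hxy⟩ : EType Y) ∈ A from hyv)
  · intro hS
    exact Or.inl ⟨S, hS, subset_rfl⟩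

theorem Wset_g {U : MFunctor.obj X} {V : MFunctor.obj Y} (h : Mtilde R U V) :
    MFunctor.map (TypeCat.ofHom gMap) (Wset R U V) = MFunctor.map (TypeCat.ofHom lamMap) V := by
  apply Subtype.ext
  ext A
  show gMap ⁻¹' A ∈ (Wset R U V).1 ↔ lamMap ⁻¹' A ∈ V.1
  constructor
  · rintro (⟨T, hTU, hsub⟩ | ⟨B, hBV, hsub⟩)
    · obtain ⟨v, hvV, hv2⟩ := h.1 (rhoMap R ⁻¹' T) hTU
      refine V.2 _ _ hvV fun y hy => ?_
      obtain ⟨x, hxu, hxy⟩ := hv2 y hy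
      exact hsub (show fMap (⟨(rhoMap R x, lamMap y), hxy⟩ : EType Y) ∈ T from hxu)
    · refine V.2 _ _ hBV fun y hy => ?_
      exact hsub (show gMap (⟨({y}, lamMap y), rfl⟩ : EType Y) ∈ B from hy)
  · intro hA
    exact Or.inr ⟨A, hA, subset_rfl⟩

def memRel (Y : Type u) : Rel (Set Y) (Set (Set Y)) := fun s A => s ∈ A

theorem Mtilde_le_lax (L : LaxLifting (MFunctor.{u})) :
    Mtilde R ≤ L.map R := by
  intro U V hUV
  -- the middle relation: membership
  have hmid : L.map (memRel Y)
      (MFunctor.map (TypeCat.ofHom (rhoMap R)) U) (MFunctor.map (TypeCat.ofHom lamMap) V) := by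
    refine L.mono ?_ _ _ (L.laxComp (flip (gr (fMap (Y := Y)))) (gr (gMap (Y := Y)))
      _ _ ⟨Wset R U V, ?_, ?_⟩)
    · rintro s A ⟨e, hfe, hge⟩
      have h1 : fMap e = s := hfe
      have h2 : gMap e = A := hge
      subst h1; subst h2
      exact e.2
    · exact L.graphInv_le fMap _ _ (Wset_f R hUV)
    · exact L.graph_le gMap _ _ (Wset_g R hUV)
  have h23 : L.map (Relation.Comp (memRel Y) (flip (gr (lamMap (Y := Y)))))
      (MFunctor.map (TypeCat.ofHom (rhoMap R)) U) V :=
    L.laxComp _ _ _ _ ⟨MFunctor.map (TypeCat.ofHom lamMap) V, hmid, L.graphInv_le lamMap _ _ rfl⟩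
  have hfull : L.map (Relation.Comp (gr (rhoMap R))
      (Relation.Comp (memRel Y) (flip (gr (lamMap (Y := Y)))))) U V :=
    L.laxComp _ _ _ _ ⟨MFunctor.map (TypeCat.ofHom (rhoMap R)) U, L.graph_le (rhoMap R) _ _ rfl, h23⟩
  refine L.mono ?_ _ _ hfull
  rintro x y ⟨s, hs, A, hsA, hA⟩
  have h1 : rhoMap R x = s := hs
  have h2 : lamMap y = A := hA
  subst h1; subst h2
  exact hsA

end Min

/-- `M̃` is the minimal lax lifting of the monotone neighbourhood functor: it is
itself a lax lifting, and it is below every lax lifting. -/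
theorem Mtilde_minimal :
    (∃ LM : LaxLifting (MFunctor.{u}), ∀ (X Y : Type u) (R : Rel X Y),
      LM.map R = Mtilde R) ∧
    (∀ (L : LaxLifting (MFunctor.{u})) (X Y : Type u) (R : Rel X Y),
      Mtilde R ≤ L.map R) := by
  constructor
  · exact ⟨⟨fun R => Mtilde R, Mtilde_mono', Mtilde_laxComp,
      Mtilde_graph_le, Mtilde_graphInv_le⟩, fun X Y R => rfl⟩
  · intro L X Y R
    exact Mtilde_le_lax R L
end
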